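/- Fix integers n ≥ 2 and 1 ≤ k ≤ n−1. Let w be a family of real numbers w_S indexed by the k-element subsets S of ℤ/(n+1)ℤ, and let v_{i,j} ∈ ℝ (i,j ∈ ℤ/(n+1)ℤ) be such that w_S = w_T + v_{i,j} whenever i ∈ S, j ∈ T and S∖{i} = T∖{j} (condition (II')). Then: (1) v_{i,j} = −v_{j,i} for all i,j; (2) v_{i,j} + v_{j,l} = v_{i,l} for all i,j,l; (3) if in addition w_S + w_{ν(S)} = 0 for every k-element subset S, where ν : ℤ/(n+1)ℤ → ℤ/(n+1)ℤ is the involution ν(i) = −1−i (condition (I)), then v_{−1−i,−1−j} = −v_{i,j} for all i,j. -/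

import Mathlib

/-- **Lemma 4.1 of the paper.**  If a family `w_S` indexed by `k`-element subsets
of `ℤ/(n+1)ℤ` satisfies condition (II') with respect to a family `v_{i,j}`, then
`v` is antisymmetric and cocyclic, and under condition (I) it satisfies
`v_{−1−i,−1−j} = −v_{i,j}`. -/
theorem exchange_cocycle_properties (n k : ℕ) (hn : 2 ≤ n) (hk1 : 1 ≤ k)
    (hk2 : k ≤ n - 1)
    (w : Finset (ZMod (n + 1)) → ℝ) (v : ZMod (n + 1) → ZMod (n + 1) → ℝ)
    (hII : ∀ (S T : Finset (ZMod (n + 1))) (i j : ZMod (n + 1)),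
        S.card = k → T.card = k → i ∈ S → j ∈ T → S.erase i = T.erase j →
        w S = w T + v i j) :
    (∀ i j, v i j = - v j i)
    ∧ (∀ i j l, v i j + v j l = v i l)
    ∧ ((∀ S : Finset (ZMod (n + 1)), S.card = k →
          w S + w (S.image fun i => -1 - i) = 0) →
        ∀ i j, v (-1 - i) (-1 - j) = - v i j) := by
  have hcardZ : Fintype.card (ZMod (n + 1)) = n + 1 := ZMod.card _
  -- existence of a (k-1)-set avoiding three given elements
  have hA : ∀ i j l : ZMod (n + 1), ∃ A : Finset (ZMod (n + 1)),
      A.card = k - 1 ∧ i ∉ A ∧ j ∉ A ∧ l ∉ A := by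
    intro i j l
    have h3 : ({i, j, l} : Finset (ZMod (n + 1))).card ≤ 3 := by
      have h1 := Finset.card_insert_le i ({j, l} : Finset (ZMod (n + 1)))
      have h2 := Finset.card_insert_le j ({l} : Finset (ZMod (n + 1)))
      simp only [Finset.card_singleton] at h2
      omega
    have hsd : (Finset.univ \ ({i, j, l} : Finset (ZMod (n + 1)))).card
        = (n + 1) - ({i, j, l} : Finset (ZMod (n + 1))).card := by
      rw [Finset.card_sdiff_of_subset (Finset.subset_univ _), Finset.card_univ, hcardZ]
    have hle : k - 1 ≤ (Finset.univ \ ({i, j, l} : Finset (ZMod (n + 1)))).card := by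
      omega
    obtain ⟨A, hAsub, hAcard⟩ := Finset.exists_subset_card_eq hle
    refine ⟨A, hAcard, ?_, ?_, ?_⟩ <;>
    · intro h
      have := hAsub h
      simp at this
  -- key computation
  have key : ∀ (A : Finset (ZMod (n + 1))) (i j : ZMod (n + 1)),
      A.card = k - 1 → i ∉ A → j ∉ A →
      v i j = w (insert i A) - w (insert j A) := by
    intro A i j hcA hi hj
    have hS : (insert i A).card = k := by
      rw [Finset.card_insert_of_notMem hi, hcA]; omega
    have hT : (insert j A).card = k := by
      rw [Finset.card_insert_of_notMem hj, hcA]; omega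
    have := hII (insert i A) (insert j A) i j hS hT
      (Finset.mem_insert_self _ _) (Finset.mem_insert_self _ _)
      (by rw [Finset.erase_insert hi, Finset.erase_insert hj])
    linarith
  have h1 : ∀ i j, v i j = - v j i := by
    intro i j
    obtain ⟨A, hc, hi, hj, -⟩ := hA i j i
    have e1 := key A i j hc hi hj
    have e2 := key A j i hc hj hi
    linarith
  have h2 : ∀ i j l, v i j + v j l = v i l := by
    intro i j l
    obtain ⟨A, hc, hi, hj, hl⟩ := hA i j l
    have e1 := key A i j hc hi hj
    have e2 := key A j l hc hj hl
    have e3 := key A i l hc hi hl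
    linarith
  refine ⟨h1, h2, ?_⟩
  intro hI i j
  obtain ⟨A, hc, hi, hj, -⟩ := hA i j i
  set ν : ZMod (n + 1) → ZMod (n + 1) := fun x => -1 - x with hν
  have hνinj : Function.Injective ν := by
    intro a b hab
    have : -1 - (-1 - a) = -1 - (-1 - b) := congrArg ν hab
    simpa using this
  have hmem : ∀ (x : ZMod (n + 1)), x ∉ A → ν x ∉ A.image ν := by
    intro x hx hmem
    obtain ⟨a, ha, hax⟩ := Finset.mem_image.mp hmem
    exact hx (hνinj hax ▸ ha)
  have hAc : (A.image ν).card = k - 1 := by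
    rw [Finset.card_image_of_injective _ hνinj, hc]
  have e1 := key A i j hc hi hj
  have e2 := key (A.image ν) (ν i) (ν j) hAc (hmem i hi) (hmem j hj)
  have himg : ∀ (x : ZMod (n + 1)), x ∉ A →
      (insert x A).image ν = insert (ν x) (A.image ν) := by
    intro x _
    rw [Finset.image_insert]
  have hcard : ∀ (x : ZMod (n + 1)), x ∉ A → (insert x A).card = k := by
    intro x hx
    rw [Finset.card_insert_of_notMem hx, hc]; omega
  have hIi := hI (insert i A) (hcard i hi)
  have hIj := hI (insert j A) (hcard j hj)
  rw [himg i hi] at hIi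
  rw [himg j hj] at hIj
  have : v (ν i) (ν j) = - v i j := by
    rw [e2, e1]
    linarith
  simpa [hν] using this
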